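/- In the three-covariate counterexample design, X'β = X₁ + X₂ and X'b̃ = X₁ + X₃ have the same sign almost surely: on the event {X₁+X₂ ≥ 0}, X₃ ∈ (1,2) so X₁ + X₃ > 0, and on {X₁+X₂ < 0}, X₃ ∈ (−2,−1) so X₁ + X₃ < 0. Hence b̃ = (1,0,1) ∈ Θ = {b : (X'b)(X'β) ≥ 0 a.s.}. -/

import Mathlib

open MeasureTheory ProbabilityTheory Set

/-- The uniform probability measure on the interval `(a, b)`. -/
noncomputable def uniformOnIoo (a b : ℝ) : Measure ℝ :=
  (ENNReal.ofReal (b - a))⁻¹ • (volume.restrict (Ioo a b))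

/-- In the three-covariate counterexample design, `X'β = X₁ + X₂` and
`X'b̃ = X₁ + X₃` have the same sign almost surely: on `{X₁+X₂ ≥ 0}`, `X₃ ∈ (1,2)` so
`X₁+X₃ > 0`, and on `{X₁+X₂ < 0}`, `X₃ ∈ (−2,−1)` so `X₁+X₃ < 0`. Hence
`b̃ = (1,0,1) ∈ Θ = {b : (X'b)(X'β) ≥ 0 a.s.}`. -/
theorem btilde_in_theta_three_covariates {Ω : Type*} [MeasurableSpace Ω]
    (μ : Measure Ω) [IsProbabilityMeasure μ]
    (X1 X2 T1 T2 : Ω → ℝ)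
    (hX1 : Measurable X1) (hX2 : Measurable X2)
    (hT1 : Measurable T1) (hT2 : Measurable T2)
    (hlawX1 : μ.map X1 = uniformOnIoo (-1) 1)
    (hlawX2 : μ.map X2 = uniformOnIoo (-1) 1)
    (hlawT1 : μ.map T1 = uniformOnIoo 1 2)
    (hlawT2 : μ.map T2 = uniformOnIoo (-2) (-1))
    (hindep : iIndepFun
      ![X1, X2, T1, T2] μ)
    -- X₃ = T₁ if X₁+X₂ ≥ 0 and X₃ = T₂ if X₁+X₂ < 0
    (X3 : Ω → ℝ)
    (hX3 : ∀ ω, X3 ω = if 0 ≤ X1 ω + X2 ω then T1 ω else T2 ω) :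
    (∀ᵐ ω ∂μ,
      (0 ≤ X1 ω + X2 ω → 0 < X1 ω + X3 ω) ∧
      (X1 ω + X2 ω < 0 → X1 ω + X3 ω < 0)) ∧
    (∀ᵐ ω ∂μ, (X1 ω + X3 ω) * (X1 ω + X2 ω) ≥ 0) := by
  have key : ∀ (f : Ω → ℝ) (a b : ℝ), Measurable f → μ.map f = uniformOnIoo a b →
      ∀ᵐ ω ∂μ, f ω ∈ Ioo a b := by
    intro f a b hf hlaw
    rw [ae_iff]
    have : μ {ω | ¬ f ω ∈ Ioo a b} = (μ.map f) (Ioo a b)ᶜ := by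
      rw [Measure.map_apply hf measurableSet_Ioo.compl]
      rfl
    rw [this, hlaw]
    simp [uniformOnIoo, Measure.restrict_apply measurableSet_Ioo.compl]
  have h1 := key X1 (-1) 1 hX1 hlawX1
  have h3 := key T1 1 2 hT1 hlawT1
  have h4 := key T2 (-2) (-1) hT2 hlawT2
  have main : ∀ᵐ ω ∂μ,
      (0 ≤ X1 ω + X2 ω → 0 < X1 ω + X3 ω) ∧
      (X1 ω + X2 ω < 0 → X1 ω + X3 ω < 0) := by
    filter_upwards [h1, h3, h4] with ω hω1 hω3 hω4
    constructor
    · intro h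
      rw [hX3, if_pos h]
      have := hω1.1; have := hω3.1; linarith
    · intro h
      rw [hX3, if_neg (by linarith)]
      have := hω1.2; have := hω4.2; linarith
  refine ⟨main, ?_⟩
  filter_upwards [main] with ω hω
  rcases le_or_gt 0 (X1 ω + X2 ω) with h | h
  · exact mul_nonneg (hω.1 h).le h
  · nlinarith [hω.2 h]
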